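/- Let A be an infinite dimensional simple unital C*-algebra with Property (SP), let B ⊆ A be a nonzero hereditary subalgebra, and let n ∈ ℕ. Then there exist nonzero, mutually orthogonal, pairwise Murray-von Neumann equivalent projections p_1, …, p_n ∈ B. -/

import Mathlib

open Matrix
open scoped ComplexOrder

noncomputable section

/-- A projection in a `*`-algebra: a selfadjoint idempotent. -/
def IsProjectionElem {A : Type*} [Mul A] [Star A] (p : A) : Prop :=
  star p = p ∧ p * p = p

/-- Murray-von Neumann equivalence of projections. -/
def MvNEquiv {A : Type*} [Mul A] [Star A] (p q : A) : Prop :=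
  ∃ v : A, star v * v = p ∧ v * star v = q

/-- `p` is Murray-von Neumann equivalent to a subprojection of `q`. -/
def MvNSubEquiv {A : Type*} [Mul A] [Star A] (p q : A) : Prop :=
  ∃ v : A, star v * v = p ∧ q * (v * star v) = v * star v

/-- The hereditary subalgebra generated by `x`: the closure of `x A x`. -/
def herSub {A : Type*} [Mul A] [TopologicalSpace A] (x : A) : Set A :=
  closure {y : A | ∃ a : A, y = x * a * x}

/-- `p` is Murray-von Neumann equivalent to a projection in the hereditary
subalgebra generated by `x`. -/
def MvNInHer {A : Type*} [Mul A] [Star A] [TopologicalSpace A] (p x : A) : Prop :=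
  ∃ q : A, IsProjectionElem q ∧ q ∈ herSub x ∧ MvNEquiv p q

/-- A hereditary subalgebra: a closed `*`-subalgebra `B` such that whenever
`0 ≤ a ≤ b` and `b ∈ B`, also `a ∈ B` (positivity expressed via squares). -/
def IsHerSub {A : Type*} [NonUnitalNonAssocRing A] [Star A] [SMul ℂ A] [TopologicalSpace A]
    (B : Set A) : Prop :=
  IsClosed B ∧ (0 : A) ∈ B ∧ (∀ x ∈ B, ∀ y ∈ B, x + y ∈ B) ∧
    (∀ x ∈ B, ∀ y ∈ B, x * y ∈ B) ∧ (∀ (c : ℂ), ∀ x ∈ B, c • x ∈ B) ∧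
    (∀ x ∈ B, star x ∈ B) ∧
    (∀ a b : A, (∃ z : A, a = star z * z) → (∃ z : A, b - a = star z * z) → b ∈ B → a ∈ B)

/-- Property (SP): every nonzero hereditary subalgebra contains a nonzero projection. -/
def PropertySP (A : Type*) [NonUnitalNonAssocRing A] [Star A] [SMul ℂ A] [TopologicalSpace A] :
    Prop :=
  ∀ B : Set A, IsHerSub B → (∃ b ∈ B, b ≠ 0) → ∃ p ∈ B, IsProjectionElem p ∧ p ≠ 0

/-- Simplicity of a C*-algebra: it is nonzero and has no nontrivial closed
two-sided ideals. -/
def IsSimpleCStarAlgebra (A : Type*) [NonUnitalNonAssocRing A] [TopologicalSpace A] : Prop :=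
  (∃ a : A, a ≠ 0) ∧
    ∀ I : TwoSidedIdeal A, IsClosed (I : Set A) → (I : Set A) = {0} ∨ (I : Set A) = Set.univ

set_option linter.unusedSectionVars false
set_option maxHeartbeats 1000000

section Aux
variable {A : Type*} [CStarAlgebra A] [PartialOrder A] [StarOrderedRing A]

lemma zero_of_mul_star (y : A) (h : y * star y = 0) : y = 0 :=
  (CStarRing.mul_star_self_eq_zero_iff y).mp h

lemma zero_of_star_mul (y : A) (h : star y * y = 0) : y = 0 :=
  (CStarRing.star_mul_self_eq_zero_iff y).mp h

lemma exists_sqrt (a : A) (ha : 0 ≤ a) : ∃ s : A, star s = s ∧ s * s = a ∧ 0 ≤ s :=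
  ⟨CFC.sqrt a, IsSelfAdjoint.of_nonneg (CFC.sqrt_nonneg a), CFC.sqrt_mul_sqrt_self a ha, CFC.sqrt_nonneg a⟩

lemma nonneg_iff_sq (a : A) : 0 ≤ a ↔ ∃ z : A, a = star z * z := by
  constructor
  · intro ha
    obtain ⟨s, hs1, hs2, _⟩ := exists_sqrt a ha
    exact ⟨s, by rw [hs1, hs2]⟩
  · rintro ⟨z, rfl⟩; exact star_mul_self_nonneg z

/-- Axiom 7 wrapper. -/
lemma IsHerSub.mem_of_le {B : Set A} (hB : IsHerSub B) {a b : A}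
    (ha : 0 ≤ a) (hab : a ≤ b) (hb : b ∈ B) : a ∈ B := by
  refine hB.2.2.2.2.2.2 a b ((nonneg_iff_sq a).mp ha) ?_ hb
  exact (nonneg_iff_sq _).mp (by simpa using hab)

lemma mem_herSub (a x : A) : a * x * a ∈ herSub a := subset_closure ⟨x, rfl⟩

lemma herSub_absorb_right {a r : A} (h : a * r = a) {z : A} (hz : z ∈ herSub a) :
    z * r = z := by
  have : herSub a ⊆ {z : A | z * r = z} := by
    refine closure_minimal ?_ (isClosed_eq (by fun_prop) continuous_id)
    rintro y ⟨x, rfl⟩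
    show a * x * a * r = a * x * a
    rw [mul_assoc (a*x) a r, h]
  exact this hz

lemma herSub_absorb_left {a r : A} (h : r * a = a) {z : A} (hz : z ∈ herSub a) :
    r * z = z := by
  have : herSub a ⊆ {z : A | r * z = z} := by
    refine closure_minimal ?_ (isClosed_eq (by fun_prop) continuous_id)
    rintro y ⟨x, rfl⟩
    show r * (a * x * a) = a * x * a
    rw [← mul_assoc, ← mul_assoc, h]
  exact this hz

lemma herSub_orth {a b : A} (h : a * b = 0) {z w : A}
    (hz : z ∈ herSub a) (hw : w ∈ herSub b) : z * w = 0 := by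
  have step1 : ∀ y ∈ {y : A | ∃ x : A, y = b * x * b}, z * y = 0 := by
    rintro y ⟨x, rfl⟩
    have : herSub a ⊆ {z : A | z * (b * x * b) = 0} := by
      refine closure_minimal ?_ (isClosed_eq (by fun_prop) continuous_const)
      rintro y' ⟨x', rfl⟩
      show a * x' * a * (b * x * b) = 0
      calc a * x' * a * (b * x * b) = a * x' * (a * b) * (x * b) := by noncomm_ring
        _ = 0 := by rw [h]; noncomm_ring
    exact this hz
  have : herSub b ⊆ {w : A | z * w = 0} := by
    refine closure_minimal ?_ (isClosed_eq (by fun_prop) continuous_const)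
    exact step1
  exact this hw

lemma herSub_smul {a : A} (c : ℂ) {z : A} (hz : z ∈ herSub a) : c • z ∈ herSub a := by
  have : herSub a ⊆ {z : A | c • z ∈ herSub a} := by
    refine closure_minimal ?_ (IsClosed.preimage (by fun_prop) isClosed_closure)
    rintro y ⟨x, rfl⟩
    exact subset_closure ⟨c • x, by simp [mul_smul_comm, smul_mul_assoc]⟩
  exact this hz

lemma herSub_add {a : A} {z w : A} (hz : z ∈ herSub a) (hw : w ∈ herSub a) :
    z + w ∈ herSub a := by
  rw [herSub, mem_closure_iff_seq_limit] at hz hw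
  obtain ⟨u, hu, hul⟩ := hz
  obtain ⟨v, hv, hvl⟩ := hw
  rw [herSub, mem_closure_iff_seq_limit]
  refine ⟨fun n => u n + v n, fun n => ?_, hul.add hvl⟩
  obtain ⟨x, hx⟩ := hu n; obtain ⟨y, hy⟩ := hv n
  exact ⟨x + y, by show u n + v n = _; rw [hx, hy, mul_add, add_mul]⟩

lemma herSub_mul {a : A} {z w : A} (hz : z ∈ herSub a) (hw : w ∈ herSub a) :
    z * w ∈ herSub a := by
  rw [herSub, mem_closure_iff_seq_limit] at hz hw
  obtain ⟨u, hu, hul⟩ := hz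
  obtain ⟨v, hv, hvl⟩ := hw
  rw [herSub, mem_closure_iff_seq_limit]
  refine ⟨fun n => u n * v n, fun n => ?_, hul.mul hvl⟩
  obtain ⟨x, hx⟩ := hu n; obtain ⟨y, hy⟩ := hv n
  exact ⟨x * (a * a) * y, by show u n * v n = _; rw [hx, hy]; noncomm_ring⟩

lemma herSub_star {a : A} (hsa : star a = a) {z : A} (hz : z ∈ herSub a) :
    star z ∈ herSub a := by
  have : herSub a ⊆ {z : A | star z ∈ herSub a} := by
    refine closure_minimal ?_ (IsClosed.preimage (by fun_prop) isClosed_closure)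
    rintro y ⟨x, rfl⟩
    refine subset_closure ⟨star x, ?_⟩
    rw [mul_assoc, StarMul.star_mul, StarMul.star_mul, hsa, mul_assoc]
  exact this hz

lemma herSub_zero (a : A) : (0:A) ∈ herSub a :=
  subset_closure ⟨0, by simp⟩

/-- Elements of B conjugate B into itself: `a * x * a ∈ B` for positive `a ∈ B`. -/
lemma IsHerSub.conj_mem {B : Set A} (hB : IsHerSub B) {a : A} (ha : a ∈ B) (ha0 : 0 ≤ a)
    (x : A) : a * x * a ∈ B := by
  have hsa : star a = a := (IsSelfAdjoint.of_nonneg ha0).star_eq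
  have hpos : ∀ y : A, 0 ≤ y → a * y * a ∈ B := by
    intro y hy
    have h1 : 0 ≤ a * y * a := by
      have := star_left_conjugate_nonneg hy a
      rwa [hsa] at this
    have key : a * y * a ≤ ‖y‖ • (a * a) := by
      have h2 : y ≤ algebraMap ℝ A ‖y‖ :=
        IsSelfAdjoint.le_algebraMap_norm_self (IsSelfAdjoint.of_nonneg hy)
      have h3 := star_left_conjugate_le_conjugate h2 a
      rw [hsa] at h3
      calc a * y * a ≤ a * algebraMap ℝ A ‖y‖ * a := h3
        _ = ‖y‖ • (a * a) := by
            rw [Algebra.algebraMap_eq_smul_one]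
            simp [mul_smul_comm, smul_mul_assoc]
    have hmem : ‖y‖ • (a * a) ∈ B := by
      have : ((‖y‖ : ℂ)) • (a * a) ∈ B := hB.2.2.2.2.1 _ _ (hB.2.2.2.1 a ha a ha)
      rwa [show ((‖y‖ : ℂ)) • (a * a) = ‖y‖ • (a * a) by
        rw [← smul_one_smul ℂ (‖y‖) (a*a)]; norm_num] at this
    exact hB.mem_of_le h1 key hmem
  have hsa' : ∀ y : A, star y = y → a * y * a ∈ B := by
    intro y hy
    have hysa : IsSelfAdjoint y := hy
    set yp := cfc (fun t : ℝ => max t 0) y with hyp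
    set ym := cfc (fun t : ℝ => max (-t) 0) y with hym
    have hsub : y = yp - ym := by
      rw [hyp, hym, ← cfc_sub _ _ y]
      calc y = cfc (id : ℝ → ℝ) y := (cfc_id ℝ y).symm
        _ = cfc (fun t : ℝ => max t 0 - max (-t) 0) y := by
            congr 1; funext t
            rcases le_total t 0 with h | h
            · simp [max_eq_right h, max_eq_left (neg_nonneg.mpr h)]
            · simp [max_eq_left h, max_eq_right (neg_nonpos.mpr h)]
    have h1 : a * yp * a ∈ B := hpos yp (cfc_nonneg (fun x _ => le_max_right _ _))
    have h2 : a * ym * a ∈ B := hpos ym (cfc_nonneg (fun x _ => le_max_right _ _))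
    have heq : a * y * a = a * yp * a + (-1 : ℂ) • (a * ym * a) := by
      rw [hsub, neg_smul, one_smul, mul_sub, sub_mul, sub_eq_add_neg]
    rw [heq]
    exact hB.2.2.1 _ h1 _ (hB.2.2.2.2.1 _ _ h2)
  -- real/imaginary decomposition with real scalars
  set re := (1/2 : ℝ) • (x + star x) with hre
  set im := (1/2 : ℝ) • (Complex.I • (star x - x)) with him
  have hre_sa : star re = re := by
    rw [hre, star_smul, star_add, star_star, star_trivial, add_comm]
  have him_sa : star im = im := by
    rw [him, star_smul, star_trivial, star_smul, star_sub, star_star,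
      show star Complex.I = -Complex.I by simp, neg_smul]
    congr 1
    rw [← smul_neg, neg_sub]
  have hIim : Complex.I • im = (1/2 : ℝ) • (x - star x) := by
    rw [him, smul_comm Complex.I ((1:ℝ)/2), smul_smul Complex.I Complex.I]
    rw [Complex.I_mul_I, neg_smul, one_smul, smul_neg]
    rw [← smul_neg, neg_sub]
  have hx_eq : x = re + Complex.I • im := by
    rw [hre, hIim, ← smul_add]
    rw [show x + star x + (x - star x) = (2:ℝ) • x by rw [two_smul]; abel]
    rw [smul_smul]; norm_num
  have heq : a * x * a = a * re * a + Complex.I • (a * im * a) := by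
    rw [hx_eq]; simp only [mul_add, add_mul, mul_smul_comm, smul_mul_assoc]
  rw [heq]
  refine hB.2.2.1 _ (hsa' re hre_sa) _ (hB.2.2.2.2.1 _ _ (hsa' im him_sa))

lemma IsHerSub.herSub_subset {B : Set A} (hB : IsHerSub B) {a : A} (ha : a ∈ B) (ha0 : 0 ≤ a) :
    herSub a ⊆ B := by
  refine closure_minimal ?_ hB.1
  rintro y ⟨x, rfl⟩
  exact hB.conj_mem ha ha0 x

end Aux

section Aux2
variable {A : Type*} [CStarAlgebra A] [PartialOrder A] [StarOrderedRing A]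

private noncomputable def phiF (n : ℕ) (t : ℝ) : ℝ := t^2 * (max ((1/((n:ℝ)+1))^2) (t^2))⁻¹
private noncomputable def psiF (n : ℕ) (t : ℝ) : ℝ := (max ((1/((n:ℝ)+1))^2) (t^2))⁻¹

private lemma max_pos (n : ℕ) (t : ℝ) : 0 < max ((1/((n:ℝ)+1))^2) (t^2) :=
  lt_max_of_lt_left (by positivity)

private lemma psiF_cont (n : ℕ) : Continuous (psiF n) := by
  unfold psiF
  exact Continuous.inv₀ (by fun_prop) (fun t => (max_pos n t).ne')

private lemma phiF_cont (n : ℕ) : Continuous (phiF n) := by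
  unfold phiF
  exact (continuous_pow 2).mul ((Continuous.inv₀ (by fun_prop) (fun t => (max_pos n t).ne')))

private lemma phiF_nonneg (n : ℕ) (t : ℝ) : 0 ≤ phiF n t := by
  unfold phiF; positivity

private lemma phiF_le_one (n : ℕ) (t : ℝ) : phiF n t ≤ 1 := by
  unfold phiF
  rw [← div_eq_mul_inv]
  exact div_le_one_of_le₀ (le_max_right _ _) (max_pos n t).le

private lemma phiF_eq_one (n : ℕ) (t : ℝ) (h : (1/((n:ℝ)+1)) ≤ t) : phiF n t = 1 := by
  unfold phiF
  have h0 : (0:ℝ) < 1/((n:ℝ)+1) := by positivity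
  have hm : max ((1/((n:ℝ)+1))^2) (t^2) = t^2 := max_eq_right (by nlinarith)
  rw [hm, mul_inv_cancel₀ (by nlinarith)]

private lemma phiF_tail (n : ℕ) (t : ℝ) (ht : 0 ≤ t) : |t - phiF n t * t| ≤ 1/((n:ℝ)+1) := by
  rcases le_or_gt ((1:ℝ)/((n:ℝ)+1)) t with h | h
  · rw [phiF_eq_one n t h, one_mul, sub_self, abs_zero]; positivity
  · have h1 : 0 ≤ phiF n t := phiF_nonneg n t
    have h2 : phiF n t ≤ 1 := phiF_le_one n t
    rw [abs_of_nonneg (by nlinarith)]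
    nlinarith

private lemma en_mem (a : A) (ha : 0 ≤ a) (n : ℕ) :
    ∃ x : A, cfc (phiF n) a = a * x * a := by
  have hsa : IsSelfAdjoint a := IsSelfAdjoint.of_nonneg ha
  refine ⟨cfc (psiF n) a, ?_⟩
  calc cfc (phiF n) a = cfc (fun t : ℝ => (t * psiF n t) * t) a := by
        congr 1; funext t; unfold phiF psiF; ring
    _ = cfc (fun t : ℝ => t * psiF n t) a * cfc (fun t : ℝ => t) a := by
        rw [cfc_mul _ _ a (by have := psiF_cont n; fun_prop) (by fun_prop)]
    _ = (cfc (fun t : ℝ => t) a * cfc (psiF n) a) * cfc (fun t : ℝ => t) a := by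
        rw [cfc_mul _ _ a (by fun_prop) ((psiF_cont n).continuousOn)]
    _ = a * cfc (psiF n) a * a := by rw [cfc_id' ℝ a hsa]

private lemma norm_en_le_one (a : A) (ha : 0 ≤ a) (n : ℕ) : ‖cfc (phiF n) a‖ ≤ 1 := by
  refine norm_cfc_le zero_le_one fun t _ => ?_
  rw [Real.norm_eq_abs, abs_of_nonneg (phiF_nonneg n t)]
  exact phiF_le_one n t

private lemma norm_one_sub_en (a : A) (ha : 0 ≤ a) (n : ℕ) :
    ‖1 - cfc (phiF n) a‖ ≤ 1 := by
  have hsa : IsSelfAdjoint a := IsSelfAdjoint.of_nonneg ha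
  have hrepr : cfc (fun t : ℝ => 1 - phiF n t) a = 1 - cfc (phiF n) a := by
    rw [cfc_sub _ _ a (by fun_prop) ((phiF_cont n).continuousOn), cfc_const_one ℝ a]
  rw [← hrepr]
  refine norm_cfc_le zero_le_one fun t _ => ?_
  rw [Real.norm_eq_abs, abs_of_nonneg (by linarith [phiF_le_one n t])]
  linarith [phiF_nonneg n t]

private lemma en_selfAdjoint (a : A) (ha : 0 ≤ a) (n : ℕ) :
    IsSelfAdjoint (cfc (phiF n) a) := cfc_predicate _ a

private lemma norm_a_sub_en_mul (a : A) (ha : 0 ≤ a) (n : ℕ) :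
    ‖(1 - cfc (phiF n) a) * a‖ ≤ 1/((n:ℝ)+1) := by
  have hsa : IsSelfAdjoint a := IsSelfAdjoint.of_nonneg ha
  have hrepr : cfc (fun t : ℝ => t - phiF n t * t) a = a - cfc (phiF n) a * a := by
    rw [cfc_sub _ _ a (by fun_prop) (by have := phiF_cont n; fun_prop)]
    rw [cfc_mul _ _ a ((phiF_cont n).continuousOn) (by fun_prop)]
    rw [cfc_id' ℝ a hsa]
  rw [sub_mul, one_mul, ← hrepr]
  refine norm_cfc_le (by positivity) fun t ht => ?_
  rw [Real.norm_eq_abs]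
  exact phiF_tail n t (spectrum_nonneg_of_nonneg ha ht)

private lemma en_approx (a : A) (ha : 0 ≤ a) {b : A} (hb : b ∈ herSub a)
    {ε : ℝ} (hε : 0 < ε) : ∃ n : ℕ, ‖(1 - cfc (phiF n) a) * b‖ < ε := by
  obtain ⟨y, hy, hyb⟩ := Metric.mem_closure_iff.mp hb (ε/2) (by positivity)
  obtain ⟨x, rfl⟩ := hy
  obtain ⟨n, hn⟩ := exists_nat_gt (2 * (‖x * a‖ + 1) / ε)
  refine ⟨n, ?_⟩
  have hsplit : (1 - cfc (phiF n) a) * b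
      = (1 - cfc (phiF n) a) * (b - a * x * a) + (1 - cfc (phiF n) a) * (a * x * a) := by
    rw [← mul_add]; congr 1; abel
  have h2 : ‖(1 - cfc (phiF n) a) * (b - a * x * a)‖ ≤ ε/2 := by
    calc ‖(1 - cfc (phiF n) a) * (b - a * x * a)‖
        ≤ ‖1 - cfc (phiF n) a‖ * ‖b - a * x * a‖ := norm_mul_le _ _
      _ ≤ 1 * (ε/2) := by
          refine mul_le_mul (norm_one_sub_en a ha n) ?_ (norm_nonneg _) zero_le_one
          exact (dist_eq_norm b (a*x*a) ▸ hyb).le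
      _ = ε/2 := one_mul _
  have h3 : ‖(1 - cfc (phiF n) a) * (a * x * a)‖ < ε/2 := by
    have key : (1 - cfc (phiF n) a) * (a * x * a)
        = ((1 - cfc (phiF n) a) * a) * (x * a) := by noncomm_ring
    rw [key]
    calc ‖((1 - cfc (phiF n) a) * a) * (x * a)‖
        ≤ ‖(1 - cfc (phiF n) a) * a‖ * ‖x * a‖ := norm_mul_le _ _
      _ ≤ (1/((n:ℝ)+1)) * ‖x * a‖ :=
          mul_le_mul_of_nonneg_right (norm_a_sub_en_mul a ha n) (norm_nonneg _)
      _ < ε/2 := by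
          have hn1 : (0:ℝ) < (n:ℝ) + 1 := by positivity
          rw [div_lt_iff₀ hε] at hn
          rw [div_mul_eq_mul_div, one_mul, div_lt_iff₀ hn1]
          nlinarith [norm_nonneg (x * a)]
  calc ‖(1 - cfc (phiF n) a) * b‖
      ≤ ‖(1 - cfc (phiF n) a) * (b - a * x * a)‖ + ‖(1 - cfc (phiF n) a) * (a * x * a)‖ := by
        rw [hsplit]; exact norm_add_le _ _
    _ < ε := by linarith

end Aux2

section Aux3
variable {A : Type*} [CStarAlgebra A] [PartialOrder A] [StarOrderedRing A]

/-- `‖y‖² = ‖y * star y‖`. -/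
private lemma norm_sq_eq (y : A) : ‖y‖ * ‖y‖ = ‖y * star y‖ := by
  have h := CStarRing.norm_star_mul_self (x := star y)
  rw [star_star] at h
  rw [h, norm_star]

lemma isHerSub_herSub (a : A) (ha : 0 ≤ a) : IsHerSub (herSub a) := by
  have hsa : IsSelfAdjoint a := IsSelfAdjoint.of_nonneg ha
  refine ⟨isClosed_closure, herSub_zero a, fun x hx y hy => herSub_add hx hy,
    fun x hx y hy => herSub_mul hx hy, fun c x hx => herSub_smul c hx,
    fun x hx => herSub_star hsa.star_eq hx, ?_⟩
  rintro c b ⟨z, rfl⟩ ⟨w, hw⟩ hb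
  set c := star z * z with hc
  have hc0 : 0 ≤ c := star_mul_self_nonneg z
  have hcsa : IsSelfAdjoint c := IsSelfAdjoint.of_nonneg hc0
  have hcb : c ≤ b := by
    rw [← sub_nonneg, hw]; exact star_mul_self_nonneg w
  rw [herSub, Metric.mem_closure_iff]
  intro ε hε
  set M := ‖z‖ + 1 with hM
  have hM0 : (0:ℝ) < M := by positivity
  set d := ε / (4 * M) with hd
  have hd0 : (0:ℝ) < d := by positivity
  obtain ⟨n, hn⟩ := en_approx a ha hb (show (0:ℝ) < d^2 by positivity)
  set e := cfc (phiF n) a with he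
  have hesa : IsSelfAdjoint e := cfc_predicate _ a
  have h1sa : IsSelfAdjoint ((1:A) - e) := (IsSelfAdjoint.one A).sub hesa
  obtain ⟨xe, hxe⟩ := en_mem a ha n
  refine ⟨e * c * e, ⟨xe * a * c * a * xe, by rw [he, hxe]; noncomm_ring⟩, ?_⟩
  rw [dist_eq_norm]
  have hkey : ‖(1 - e) * star z‖ ≤ d := by
    have hsq : ‖(1 - e) * star z‖ * ‖(1 - e) * star z‖ = ‖(1 - e) * c * (1 - e)‖ := by
      rw [norm_sq_eq]
      congr 1
      rw [StarMul.star_mul, star_star, h1sa.star_eq, hc]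
      noncomm_ring
    have hmono : ‖(1 - e) * c * (1 - e)‖ ≤ ‖(1 - e) * b * (1 - e)‖ := by
      refine CStarAlgebra.norm_le_norm_of_nonneg_of_le ?_ ?_
      · have := star_left_conjugate_nonneg hc0 (1 - e)
        rwa [h1sa.star_eq] at this
      · have := star_left_conjugate_le_conjugate hcb (1 - e)
        rwa [h1sa.star_eq] at this
    have hb2 : ‖(1 - e) * b * (1 - e)‖ ≤ ‖(1 - e) * b‖ := by
      calc ‖(1 - e) * b * (1 - e)‖ ≤ ‖(1 - e) * b‖ * ‖1 - e‖ := norm_mul_le _ _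
        _ ≤ ‖(1 - e) * b‖ * 1 :=
            mul_le_mul_of_nonneg_left (norm_one_sub_en a ha n) (norm_nonneg _)
        _ = ‖(1 - e) * b‖ := mul_one _
    have hs2 : ‖(1 - e) * star z‖^2 ≤ d^2 := by
      rw [sq, hsq]
      exact le_trans hmono (le_trans hb2 hn.le)
    calc ‖(1 - e) * star z‖ = Real.sqrt (‖(1 - e) * star z‖^2) :=
          (Real.sqrt_sq (norm_nonneg _)).symm
      _ ≤ Real.sqrt (d^2) := Real.sqrt_le_sqrt hs2
      _ = d := Real.sqrt_sq hd0.le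
  have hzc : ‖(1 - e) * c‖ ≤ d * ‖z‖ := by
    calc ‖(1 - e) * c‖ = ‖((1 - e) * star z) * z‖ := by rw [hc, mul_assoc]
      _ ≤ ‖(1 - e) * star z‖ * ‖z‖ := norm_mul_le _ _
      _ ≤ d * ‖z‖ := mul_le_mul_of_nonneg_right hkey (norm_nonneg z)
  have hcz : ‖c * (1 - e)‖ ≤ d * ‖z‖ := by
    have hst : c * (1 - e) = star ((1 - e) * c) := by
      rw [StarMul.star_mul, h1sa.star_eq, hcsa.star_eq]
    rw [hst, norm_star]
    exact hzc
  have hB2 : ‖e * (c * (1 - e))‖ ≤ d * ‖z‖ := by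
    calc ‖e * (c * (1 - e))‖ ≤ ‖e‖ * ‖c * (1 - e)‖ := norm_mul_le _ _
      _ ≤ 1 * (d * ‖z‖) :=
          mul_le_mul (norm_en_le_one a ha n) hcz (norm_nonneg _) zero_le_one
      _ = d * ‖z‖ := one_mul _
  have hsplit : c - e * c * e = (1 - e) * c + e * (c * (1 - e)) := by noncomm_ring
  have hfinal : ‖c - e * c * e‖ ≤ 2 * (d * ‖z‖) := by
    calc ‖c - e * c * e‖ ≤ ‖(1 - e) * c‖ + ‖e * (c * (1 - e))‖ := by
          rw [hsplit]; exact norm_add_le _ _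
      _ ≤ d * ‖z‖ + d * ‖z‖ := add_le_add hzc hB2
      _ = 2 * (d * ‖z‖) := by ring
  have hdM : d * M = ε / 4 := by
    rw [hd]; field_simp
  have hlt : d * ‖z‖ < d * M := by
    refine mul_lt_mul_of_pos_left ?_ hd0
    rw [hM]; linarith [norm_nonneg z]
  calc ‖c - e * c * e‖ ≤ 2 * (d * ‖z‖) := hfinal
    _ < 2 * (d * M) := by linarith
    _ = ε / 2 := by rw [hdM]; ring
    _ < ε := by linarith

lemma herSub_nonzero (a : A) (ha : 0 ≤ a) (h0 : a ≠ 0) : ∃ b ∈ herSub a, b ≠ 0 := by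
  refine ⟨a * a, by simpa using mem_herSub a 1, ?_⟩
  intro h
  apply h0
  have hsa : IsSelfAdjoint a := IsSelfAdjoint.of_nonneg ha
  have h2 : ‖a‖ * ‖a‖ = 0 := by
    rw [norm_sq_eq a, hsa.star_eq, h, norm_zero]
  exact norm_eq_zero.mp (mul_self_eq_zero.mp h2)

end Aux3

section Aux4
variable {A : Type*} [CStarAlgebra A] [PartialOrder A] [StarOrderedRing A]

private lemma span_mul_left (r : A) (x : A) {y : A}
    (hy : y ∈ Submodule.span ℂ {y : A | ∃ a b : A, y = a * r * b}) :
    x * y ∈ Submodule.span ℂ {y : A | ∃ a b : A, y = a * r * b} := by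
  induction hy using Submodule.span_induction with
  | mem y hy =>
      obtain ⟨a, b, rfl⟩ := hy
      exact Submodule.subset_span ⟨x * a, b, by noncomm_ring⟩
  | zero => simpa using Submodule.zero_mem _
  | add y z _ _ hy hz => rw [mul_add]; exact Submodule.add_mem _ hy hz
  | smul c y _ hy => rw [mul_smul_comm]; exact Submodule.smul_mem _ c hy

private lemma span_mul_right (r : A) (x : A) {y : A}
    (hy : y ∈ Submodule.span ℂ {y : A | ∃ a b : A, y = a * r * b}) :
    y * x ∈ Submodule.span ℂ {y : A | ∃ a b : A, y = a * r * b} := by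
  induction hy using Submodule.span_induction with
  | mem y hy =>
      obtain ⟨a, b, rfl⟩ := hy
      exact Submodule.subset_span ⟨a, b * x, by noncomm_ring⟩
  | zero => simpa using Submodule.zero_mem _
  | add y z _ _ hy hz => rw [add_mul]; exact Submodule.add_mem _ hy hz
  | smul c y _ hy => rw [smul_mul_assoc]; exact Submodule.smul_mem _ c hy

lemma dense_ideal (hsimple : IsSimpleCStarAlgebra A) (r : A) (hr : r ≠ 0) :
    closure ((Submodule.span ℂ {y : A | ∃ a b : A, y = a * r * b} : Submodule ℂ A) : Set A)
      = Set.univ := by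
  set N := Submodule.span ℂ {y : A | ∃ a b : A, y = a * r * b} with hN
  set C : Set A := closure (N : Set A) with hC
  have haddC : ∀ {x y : A}, x ∈ C → y ∈ C → x + y ∈ C := fun hx hy =>
    (N.topologicalClosure.add_mem (by exact hx) (by exact hy))
  have hnegC : ∀ {x : A}, x ∈ C → -x ∈ C := fun hx =>
    (N.topologicalClosure.neg_mem (by exact hx))
  have hleft : ∀ {x y : A}, y ∈ C → x * y ∈ C := by
    intro x y hy
    have hsub : (N : Set A) ⊆ {y : A | x * y ∈ C} := fun z hz =>
      subset_closure (span_mul_left r x hz)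
    have hcl : IsClosed {y : A | x * y ∈ C} :=
      IsClosed.preimage (continuous_const.mul continuous_id) isClosed_closure
    exact closure_minimal hsub hcl hy
  have hright : ∀ {x y : A}, x ∈ C → x * y ∈ C := by
    intro x y hx
    have hsub : (N : Set A) ⊆ {z : A | z * y ∈ C} := fun z hz =>
      subset_closure (span_mul_right r y hz)
    have hcl : IsClosed {z : A | z * y ∈ C} :=
      IsClosed.preimage (continuous_id.mul continuous_const) isClosed_closure
    exact closure_minimal hsub hcl hx
  set I : TwoSidedIdeal A := TwoSidedIdeal.mk' C
    (subset_closure (Submodule.zero_mem N)) haddC hnegC hleft hright with hI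
  have hIC : (I : Set A) = C := by
    ext x
    simp [hI, TwoSidedIdeal.mem_mk']
  have := hsimple.2 I (by rw [hIC]; exact isClosed_closure)
  rw [hIC] at this
  rcases this with h | h
  · exfalso
    have hrC : r ∈ C := subset_closure (Submodule.subset_span ⟨1, 1, by simp⟩)
    rw [h] at hrC
    exact hr hrC
  · exact h

lemma corner_nonzero (hsimple : IsSimpleCStarAlgebra A) (q r : A) (hq : q ≠ 0) (hr : r ≠ 0) :
    ∃ a : A, q * a * r ≠ 0 := by
  by_contra h
  push_neg at h
  apply hq
  have hz : ∀ y ∈ Submodule.span ℂ {y : A | ∃ a b : A, y = a * r * b}, q * y * r = 0 ∨ True := fun _ _ => Or.inr trivial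
  have hann : ∀ y ∈ Submodule.span ℂ {y : A | ∃ a b : A, y = a * r * b}, q * y = 0 := by
    intro y hy
    induction hy using Submodule.span_induction with
    | mem y hy =>
        obtain ⟨a, b, rfl⟩ := hy
        calc q * (a * r * b) = (q * a * r) * b := by noncomm_ring
          _ = 0 := by rw [h a, zero_mul]
    | zero => simp
    | add y z _ _ hy hz => rw [mul_add, hy, hz, add_zero]
    | smul c y _ hy => rw [mul_smul_comm, hy, smul_zero]
  have hcl : IsClosed {y : A | q * y = 0} :=
    isClosed_eq (continuous_const.mul continuous_id) continuous_const
  have hsub : closure ((Submodule.span ℂ {y : A | ∃ a b : A, y = a * r * b} : Submodule ℂ A) : Set A)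
      ⊆ {y : A | q * y = 0} := closure_minimal hann hcl
  rw [dense_ideal hsimple r hr] at hsub
  have := hsub (Set.mem_univ 1)
  simpa using this

private lemma span_rep (q : A) {v : A}
    (hv : v ∈ Submodule.span ℂ {y : A | ∃ a b : A, y = a * q * b}) :
    ∃ (m : ℕ) (af bf : Fin m → A), v = ∑ i, af i * q * bf i := by
  induction hv using Submodule.span_induction with
  | mem y hy =>
      obtain ⟨a, b, rfl⟩ := hy
      exact ⟨1, fun _ => a, fun _ => b, by simp⟩
  | zero => exact ⟨0, Fin.elim0, Fin.elim0, by simp⟩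
  | add y z _ _ hy hz =>
      obtain ⟨m1, af1, bf1, rfl⟩ := hy
      obtain ⟨m2, af2, bf2, rfl⟩ := hz
      refine ⟨m1 + m2, Fin.append af1 af2, Fin.append bf1 bf2, ?_⟩
      rw [Fin.sum_univ_add]
      congr 1
      · exact Finset.sum_congr rfl fun i _ => by rw [Fin.append_left, Fin.append_left]
      · exact Finset.sum_congr rfl fun i _ => by rw [Fin.append_right, Fin.append_right]
  | smul c y _ hy =>
      obtain ⟨m, af, bf, rfl⟩ := hy
      refine ⟨m, fun i => c • af i, bf, ?_⟩
      rw [Finset.smul_sum]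
      exact Finset.sum_congr rfl fun i _ => by rw [smul_mul_assoc, smul_mul_assoc]

lemma fd_of_corner (hsimple : IsSimpleCStarAlgebra A) (q : A) (hq : q ≠ 0)
    (hcorner : ∀ y : A, ∃ c : ℂ, q * y * q = c • q) : FiniteDimensional ℂ A := by
  have hdense := dense_ideal hsimple q hq
  have h1 : (1:A) ∈ closure ((Submodule.span ℂ {y : A | ∃ a b : A, y = a * q * b} : Submodule ℂ A) : Set A) := by
    rw [hdense]; trivial
  obtain ⟨u, hu, hu1⟩ := Metric.mem_closure_iff.mp h1 1 one_pos
  have hunit : IsUnit u := by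
    have h : ‖(1:A) - u‖ < 1 := by
      rw [← dist_eq_norm]; exact hu1
    simpa using (Units.oneSub (1 - u) h).isUnit
  obtain ⟨U, hU⟩ := hunit
  set w : A := ↑U⁻¹ with hw
  have hwu : w * u = 1 := by rw [hw, ← hU]; exact U.inv_mul
  have huw : u * w = 1 := by rw [hw, ← hU]; exact U.mul_inv
  obtain ⟨m, af, bf, hrep⟩ := span_rep q hu
  set T : Set A := Set.range (fun p : Fin m × Fin m => af p.1 * q * bf p.2) with hT
  have hspan : ∀ z : A, z ∈ Submodule.span ℂ T := by
    intro z
    have hz : z = u * (w * z * w) * u := by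
      calc z = 1 * z * 1 := by simp
        _ = (u * w) * z * (w * u) := by rw [huw, hwu]
        _ = u * (w * z * w) * u := by noncomm_ring
    set y := w * z * w with hy
    rw [hz, hrep]
    rw [Finset.sum_mul, Finset.sum_mul]
    refine Submodule.sum_mem _ fun i _ => ?_
    rw [mul_assoc, Finset.mul_sum, Finset.mul_sum]
    refine Submodule.sum_mem _ fun j _ => ?_
    obtain ⟨c, hc⟩ := hcorner (bf i * y * af j)
    have hterm : af i * q * bf i * (y * (af j * q * bf j))
        = af i * (q * (bf i * y * af j) * q) * bf j := by noncomm_ring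
    rw [hterm, hc, mul_smul_comm, smul_mul_assoc]
    exact Submodule.smul_mem _ c (Submodule.subset_span ⟨(i, j), rfl⟩)
  rw [show FiniteDimensional ℂ A = Module.Finite ℂ A from rfl]
  rw [Module.finite_def, Submodule.fg_def]
  exact ⟨T, Set.finite_range _, le_antisymm le_top (fun z _ => hspan z)⟩

end Aux4

section Aux5
variable {A : Type*} [CStarAlgebra A] [PartialOrder A] [StarOrderedRing A]

private lemma real_smul_eq (r : ℝ) (q : A) : (r : ℂ) • q = r • q := by
  rw [← smul_one_smul ℂ r q]; norm_num

private lemma IsHerSub.real_smul_mem {B : Set A} (hB : IsHerSub B) (r : ℝ) {q : A}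
    (hq : q ∈ B) : r • q ∈ B := by
  rw [← real_smul_eq]
  exact hB.2.2.2.2.1 _ _ hq

/-- Functional-calculus parts of a corner element absorb the corner projection. -/
private lemma corner_part (q x : A) (hq : IsProjectionElem q) (hx : IsSelfAdjoint x)
    (hqx : q * x = x) (hxq : x * q = x) (f : ℝ → ℝ) (hf : Continuous f)
    (hf0 : ∀ t, 0 ≤ f t) (hfabs : ∀ t, f t ≤ |t|) :
    0 ≤ cfc f x ∧ cfc f x * q = cfc f x ∧ q * cfc f x = cfc f x ∧
      cfc f x ≤ ‖cfc f x‖ • q := by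
  have hqsa : IsSelfAdjoint q := hq.1
  have h1q : IsSelfAdjoint ((1:A) - q) := (IsSelfAdjoint.one A).sub hqsa
  have hx1q : x * (1 - q) = 0 := by rw [mul_sub, mul_one, hxq, sub_self]
  have h1qx : (1 - q) * x = 0 := by rw [sub_mul, one_mul, hqx, sub_self]
  set p := cfc f x with hp
  have hp0 : 0 ≤ p := cfc_nonneg (fun t _ => hf0 t)
  have hpsa : IsSelfAdjoint p := IsSelfAdjoint.of_nonneg hp0
  -- abs := cfc |·| x
  set abs := cfc (fun t : ℝ => |t|) x with habs
  have habs_sa : IsSelfAdjoint abs := cfc_predicate _ x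
  have habs_sq : abs * abs = x * x := by
    rw [habs, ← cfc_mul _ _ x (by fun_prop) (by fun_prop)]
    calc cfc (fun t : ℝ => |t| * |t|) x = cfc (fun t : ℝ => t * t) x := by
          congr 1; funext t; rw [abs_mul_abs_self]
      _ = x * x := by
          rw [cfc_mul _ _ x (by fun_prop) (by fun_prop), cfc_id' ℝ x hx]
  have habs_1q : abs * (1 - q) = 0 := by
    have hy : star (abs * (1 - q)) * (abs * (1 - q)) = 0 := by
      rw [StarMul.star_mul, h1q.star_eq, habs_sa.star_eq]
      calc (1 - q) * abs * (abs * (1 - q)) = (1 - q) * (abs * abs) * (1 - q) := by noncomm_ring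
        _ = (1 - q) * (x * x) * (1 - q) := by rw [habs_sq]
        _ = ((1 - q) * x) * (x * (1 - q)) := by noncomm_ring
        _ = 0 := by rw [h1qx, zero_mul]
    exact zero_of_star_mul _ hy
  -- p * (1-q) = 0 via sqrt of f
  have hs : cfc (fun t : ℝ => Real.sqrt (f t)) x * cfc (fun t : ℝ => Real.sqrt (f t)) x = p := by
    rw [← cfc_mul _ _ x (by fun_prop) (by fun_prop)]
    congr 1; funext t; exact Real.mul_self_sqrt (hf0 t)
  set s := cfc (fun t : ℝ => Real.sqrt (f t)) x with hsdef
  have hssa : IsSelfAdjoint s := cfc_predicate _ x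
  have hple : p ≤ abs := cfc_mono (fun t _ => hfabs t)
  have hconj0 : (1 - q) * p * (1 - q) = 0 := by
    refine le_antisymm ?_ ?_
    · calc (1 - q) * p * (1 - q) ≤ (1 - q) * abs * (1 - q) := by
            have := star_left_conjugate_le_conjugate hple (1 - q)
            rwa [h1q.star_eq] at this
        _ = (1 - q) * (abs * (1 - q)) := by rw [mul_assoc]
        _ = 0 := by rw [habs_1q, mul_zero]
    · have := star_left_conjugate_nonneg hp0 (1 - q)
      rwa [h1q.star_eq] at this
  have hs1q : s * (1 - q) = 0 := by
    have hy : star (s * (1 - q)) * (s * (1 - q)) = 0 := by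
      rw [StarMul.star_mul, h1q.star_eq, hssa.star_eq]
      calc (1 - q) * s * (s * (1 - q)) = (1 - q) * (s * s) * (1 - q) := by noncomm_ring
        _ = (1 - q) * p * (1 - q) := by rw [hs]
        _ = 0 := hconj0
    exact zero_of_star_mul _ hy
  have hpq : p * q = p := by
    have : p * (1 - q) = 0 := by
      calc p * (1 - q) = s * (s * (1 - q)) := by rw [← mul_assoc, hs]
        _ = 0 := by rw [hs1q, mul_zero]
    rw [mul_sub, mul_one, sub_eq_zero] at this
    exact this.symm
  have hqp : q * p = p := by
    have := congrArg star hpq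
    rwa [StarMul.star_mul, hqsa.star_eq, hpsa.star_eq] at this
  refine ⟨hp0, hpq, hqp, ?_⟩
  have hnorm : p ≤ algebraMap ℝ A ‖p‖ := IsSelfAdjoint.le_algebraMap_norm_self hpsa
  have hconj := star_left_conjugate_le_conjugate hnorm q
  rw [hqsa.star_eq] at hconj
  calc p = q * p * q := by rw [hqp, hpq]
    _ ≤ q * algebraMap ℝ A ‖p‖ * q := hconj
    _ = ‖p‖ • q := by
        rw [Algebra.algebraMap_eq_smul_one, mul_smul_comm, mul_one, smul_mul_assoc, hq.2]

lemma two_orth (hinfdim : ¬ FiniteDimensional ℂ A) (hsimple : IsSimpleCStarAlgebra A)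
    (hSP : PropertySP A) (B : Set A) (hB : IsHerSub B) (hBne : ∃ b ∈ B, b ≠ 0) :
    ∃ a b : A, a ∈ B ∧ b ∈ B ∧ 0 ≤ a ∧ 0 ≤ b ∧ a ≠ 0 ∧ b ≠ 0 ∧ a * b = 0 ∧ b * a = 0 := by
  obtain ⟨q, hqB, hqproj, hq0⟩ := hSP B hB hBne
  by_cases hc : ∀ y : A, ∃ c : ℂ, q * y * q = c • q
  · exact absurd (fd_of_corner hsimple q hq0 hc) hinfdim
  push_neg at hc
  obtain ⟨y, hy⟩ := hc
  have hqsa : IsSelfAdjoint q := hqproj.1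
  have hqq : q * q = q := hqproj.2
  -- both corner parts
  set y' := q * y * q with hy'
  have hsty' : star y' = q * star y * q := by
    rw [hy', StarMul.star_mul, StarMul.star_mul, hqsa.star_eq, mul_assoc]
  have habs : ∀ z : A, q * (q * z * q) = q * z * q ∧ (q * z * q) * q = q * z * q := by
    intro z
    constructor
    · calc q * (q * z * q) = (q * q) * z * q := by noncomm_ring
        _ = q * z * q := by rw [hqq]
    · calc (q * z * q) * q = q * z * (q * q) := by noncomm_ring
        _ = q * z * q := by rw [hqq]
  set re := (1/2 : ℝ) • (y' + star y') with hre
  set im := (1/2 : ℝ) • (Complex.I • (star y' - y')) with him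
  have hre_sa : IsSelfAdjoint re := by
    show star re = re
    rw [hre, star_smul, star_trivial, star_add, star_star, add_comm]
  have him_sa : IsSelfAdjoint im := by
    show star im = im
    rw [him, star_smul, star_trivial, star_smul, star_sub, star_star,
      show star Complex.I = -Complex.I by simp, neg_smul]
    congr 1
    rw [← smul_neg, neg_sub]
  have hy'_eq : y' = re + Complex.I • im := by
    have hIim : Complex.I • im = (1/2 : ℝ) • (y' - star y') := by
      rw [him, smul_comm Complex.I ((1:ℝ)/2), smul_smul Complex.I Complex.I]
      rw [Complex.I_mul_I, neg_smul, one_smul, smul_neg]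
      rw [← smul_neg, neg_sub]
    rw [hre, hIim, ← smul_add]
    rw [show y' + star y' + (y' - star y') = (2:ℝ) • y' by rw [two_smul]; abel]
    rw [smul_smul]; norm_num
  have hre_abs : q * re = re ∧ re * q = re := by
    constructor
    · rw [hre, mul_smul_comm, hsty', mul_add, (habs y).1, (habs (star y)).1]
    · rw [hre, smul_mul_assoc, hsty', add_mul, (habs y).2, (habs (star y)).2]
  have him_abs : q * im = im ∧ im * q = im := by
    have him2 : im = (1/2 : ℝ) • (Complex.I • (q * (star y - y) * q)) := by
      rw [him, hsty', hy']
      congr 2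
      noncomm_ring
    constructor
    · rw [him2, mul_smul_comm, mul_smul_comm, (habs (star y - y)).1]
    · rw [him2, smul_mul_assoc, smul_mul_assoc, (habs (star y - y)).2]
  -- a selfadjoint non-scalar corner element
  have hkey : ∃ x : A, IsSelfAdjoint x ∧ q * x = x ∧ x * q = x ∧ ∀ l : ℝ, x ≠ l • q := by
    have hnotboth : (∀ c : ℂ, re ≠ c • q) ∨ (∀ c : ℂ, im ≠ c • q) := by
      by_contra h
      push_neg at h
      obtain ⟨⟨c1, hc1⟩, ⟨c2, hc2⟩⟩ := h
      apply hy (c1 + Complex.I * c2)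
      rw [hy'_eq, hc1, hc2, smul_smul, ← add_smul]
    have hreal : ∀ x : A, IsSelfAdjoint x → (∀ c : ℂ, x ≠ c • q) → ∀ l : ℝ, x ≠ l • q := by
      intro x _ hx l hl
      exact hx (l : ℂ) (by rw [real_smul_eq]; exact hl)
    rcases hnotboth with h | h
    · exact ⟨re, hre_sa, hre_abs.1, hre_abs.2, hreal re hre_sa h⟩
    · exact ⟨im, him_sa, him_abs.1, him_abs.2, hreal im him_sa h⟩
  obtain ⟨x, hxsa, hqx, hxq, hxns⟩ := hkey
  -- assume no orthogonal pair; derive the scalar contradiction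
  by_contra h0
  push_neg at h0
  -- for each l : ℝ, one of the parts of x - l • q vanishes
  have hparts : ∀ l : ℝ, 0 ≤ x - l • q ∨ x - l • q ≤ 0 := by
    intro l
    set yl := x - l • q with hyl
    have hylsa : IsSelfAdjoint yl := by
      show star yl = yl
      rw [hyl, star_sub, hxsa.star_eq, star_smul, star_trivial, hqsa.star_eq]
    have hqyl : q * yl = yl := by
      rw [hyl, mul_sub, hqx, mul_smul_comm, hqq]
    have hylq : yl * q = yl := by
      rw [hyl, sub_mul, hxq, smul_mul_assoc, hqq]
    have hposf : Continuous (fun t : ℝ => max t 0) := by fun_prop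
    have hnegf : Continuous (fun t : ℝ => max (-t) 0) := by fun_prop
    obtain ⟨hxp0, hxpq, hqxp, hxple⟩ := corner_part q yl hqproj hylsa hqyl hylq
      (fun t => max t 0) hposf (fun t => le_max_right _ _)
      (fun t => le_trans (max_le (le_abs_self t) (abs_nonneg t)) le_rfl)
    obtain ⟨hxm0, hxmq, hqxm, hxmle⟩ := corner_part q yl hqproj hylsa hqyl hylq
      (fun t => max (-t) 0) hnegf (fun t => le_max_right _ _)
      (fun t => max_le (neg_le_abs t) (abs_nonneg t))
    set xp := cfc (fun t : ℝ => max t 0) yl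
    set xm := cfc (fun t : ℝ => max (-t) 0) yl
    have hxpB : xp ∈ B := hB.mem_of_le hxp0 hxple (hB.real_smul_mem _ hqB)
    have hxmB : xm ∈ B := hB.mem_of_le hxm0 hxmle (hB.real_smul_mem _ hqB)
    have hprod : xp * xm = 0 := by
      rw [← cfc_mul _ _ yl hposf.continuousOn hnegf.continuousOn]
      calc cfc (fun t : ℝ => max t 0 * max (-t) 0) yl = cfc (fun _ : ℝ => (0:ℝ)) yl := by
            congr 1; funext t
            rcases le_total t 0 with h | h
            · rw [max_eq_right h, zero_mul]
            · rw [max_eq_right (neg_nonpos.mpr h), mul_zero]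
        _ = 0 := by rw [cfc_const (0:ℝ) yl hylsa]; simp
    have hprod' : xm * xp = 0 := by
      rw [← cfc_mul _ _ yl hnegf.continuousOn hposf.continuousOn]
      calc cfc (fun t : ℝ => max (-t) 0 * max t 0) yl = cfc (fun _ : ℝ => (0:ℝ)) yl := by
            congr 1; funext t
            rcases le_total t 0 with h | h
            · rw [max_eq_right h, mul_zero]
            · rw [max_eq_right (neg_nonpos.mpr h), zero_mul]
        _ = 0 := by rw [cfc_const (0:ℝ) yl hylsa]; simp
    have hdiff : yl = xp - xm := by
      rw [← cfc_sub _ _ yl hposf.continuousOn hnegf.continuousOn]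
      calc yl = cfc (id : ℝ → ℝ) yl := (cfc_id ℝ yl hylsa).symm
        _ = cfc (fun t : ℝ => max t 0 - max (-t) 0) yl := by
            congr 1; funext t
            rcases le_total t 0 with h | h
            · simp [max_eq_right h, max_eq_left (neg_nonneg.mpr h)]
            · simp [max_eq_left h, max_eq_right (neg_nonpos.mpr h)]
    have := h0 xp xm hxpB hxmB hxp0 hxm0
    rcases Classical.em (xp = 0) with hp | hp
    · right
      rw [hdiff, hp, zero_sub]
      exact neg_nonpos.mpr hxm0
    · rcases Classical.em (xm = 0) with hm | hm
      · left
        rw [hdiff, hm, sub_zero]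
        exact hxp0
      · exact absurd hprod' (this hp hm hprod)
  -- the cut argument
  set S := {l : ℝ | 0 ≤ x - l • q} with hS
  set T := {l : ℝ | x - l • q ≤ 0} with hT
  have hScl : IsClosed S := by
    have : Continuous (fun l : ℝ => x - l • q) := by fun_prop
    exact IsClosed.preimage this CStarAlgebra.isClosed_nonneg
  have hTcl : IsClosed T := by
    have hcont : Continuous (fun l : ℝ => x - l • q) := by fun_prop
    have : IsClosed {a : A | a ≤ 0} := isClosed_le continuous_id continuous_const
    exact IsClosed.preimage hcont this
  have hq_nonneg : 0 ≤ q := by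
    rw [nonneg_iff_sq]
    exact ⟨q, by rw [hqsa.star_eq, hqq]⟩
  have hxq_le : x ≤ ‖x‖ • q := by
    have h1 : x ≤ algebraMap ℝ A ‖x‖ := IsSelfAdjoint.le_algebraMap_norm_self hxsa
    have h2 := star_left_conjugate_le_conjugate h1 q
    rw [hqsa.star_eq] at h2
    calc x = q * x * q := by rw [hqx, hxq]
      _ ≤ q * algebraMap ℝ A ‖x‖ * q := h2
      _ = ‖x‖ • q := by
          rw [Algebra.algebraMap_eq_smul_one, mul_smul_comm, mul_one, smul_mul_assoc, hqq]
  have hmemS : (-‖x‖) ∈ S := by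
    show 0 ≤ x - (-‖x‖) • q
    have h2 := IsSelfAdjoint.le_algebraMap_norm_self hxsa.neg
    rw [norm_neg] at h2
    have h1 : 0 ≤ x + algebraMap ℝ A ‖x‖ := by
      rw [← sub_nonneg] at h2
      rwa [sub_neg_eq_add, add_comm] at h2
    have h3 := star_left_conjugate_nonneg h1 q
    rw [hqsa.star_eq] at h3
    have h4 : q * (x + algebraMap ℝ A ‖x‖) * q = x + ‖x‖ • q := by
      rw [mul_add, add_mul]
      congr 1
      · rw [hqx, hxq]
      · rw [Algebra.algebraMap_eq_smul_one, mul_smul_comm, mul_one, smul_mul_assoc, hqq]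
    rw [neg_smul, sub_neg_eq_add, ← h4]
    exact h3
  have hbdd : BddAbove S := by
    refine ⟨‖x‖, fun l hl => ?_⟩
    by_contra hgt
    push_neg at hgt
    have h1 : (0:A) ≤ x - l • q := hl
    have h2 : x - l • q ≤ (‖x‖ - l) • q := by
      rw [sub_smul]
      exact sub_le_sub_right hxq_le _
    have h3 : (0:A) ≤ (‖x‖ - l) • q := le_trans h1 h2
    have h4 : (0:A) ≤ (l - ‖x‖) • q := smul_nonneg (by linarith) hq_nonneg
    have h5 : (l - ‖x‖) • q ≤ 0 := by
      have hneg : -((l - ‖x‖) • q) = (‖x‖ - l) • q := by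
        rw [← neg_smul, neg_sub]
      rw [← neg_nonneg, hneg]
      exact h3
    have h6 : (l - ‖x‖) • q = 0 := le_antisymm h5 h4
    rcases smul_eq_zero.mp h6 with h | h
    · have : l - ‖x‖ ≠ 0 := by linarith
      exact this h
    · exact hq0 h
  set l0 := sSup S with hl0
  have hS0 : l0 ∈ S := hScl.csSup_mem ⟨_, hmemS⟩ hbdd
  have hWT : ∀ n : ℕ, (l0 + 1/((n:ℝ)+1)) ∈ T := by
    intro n
    rcases hparts (l0 + 1/((n:ℝ)+1)) with h | h
    · exfalso
      have hle : l0 + 1/((n:ℝ)+1) ≤ l0 := le_csSup hbdd h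
      have hpos : (0:ℝ) < 1/((n:ℝ)+1) := by positivity
      linarith
    · exact h
  have hT0 : l0 ∈ T := by
    have htend : Filter.Tendsto (fun n : ℕ => l0 + 1/((n:ℝ)+1)) Filter.atTop (nhds l0) := by
      have h := tendsto_one_div_add_atTop_nhds_zero_nat (𝕜 := ℝ)
      have := Filter.Tendsto.const_add l0 h
      simpa using this
    exact hTcl.mem_of_tendsto htend (Filter.Eventually.of_forall hWT)
  have hfin : x - l0 • q = 0 := le_antisymm hT0 hS0
  exact hxns l0 (sub_eq_zero.mp hfin)

end Aux5

section Aux6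
variable {A : Type*} [CStarAlgebra A] [PartialOrder A] [StarOrderedRing A]

lemma mvn_refl {p : A} (hp : IsProjectionElem p) : MvNEquiv p p :=
  ⟨p, by rw [hp.1, hp.2], by rw [hp.1, hp.2]⟩

lemma mvn_symm {p q : A} (h : MvNEquiv p q) : MvNEquiv q p := by
  obtain ⟨v, h1, h2⟩ := h
  exact ⟨star v, by rwa [star_star], by rwa [star_star]⟩

lemma mvn_trans {p q r : A} (hp : IsProjectionElem p) (hr : IsProjectionElem r)
    (h1 : MvNEquiv p q) (h2 : MvNEquiv q r) : MvNEquiv p r := by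
  obtain ⟨v, hv1, hv2⟩ := h1
  obtain ⟨w, hw1, hw2⟩ := h2
  refine ⟨w * v, ?_, ?_⟩
  · calc star (w * v) * (w * v) = star v * (star w * w) * v := by
          rw [StarMul.star_mul]; noncomm_ring
      _ = star v * (v * star v) * v := by rw [hw1, hv2]
      _ = (star v * v) * (star v * v) := by noncomm_ring
      _ = p := by rw [hv1, hp.2]
  · calc (w * v) * star (w * v) = w * (v * star v) * star w := by
          rw [StarMul.star_mul]; noncomm_ring
      _ = w * (star w * w) * star w := by rw [hv2, hw1]
      _ = (w * star w) * (w * star w) := by noncomm_ring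
      _ = r := by rw [hw2, hr.2]

/-- Transfer of a subprojection along a Murray-von Neumann equivalence. -/
lemma mvn_transfer {u p0 p1 f : A} (hu1 : star u * u = p0) (hu2 : u * star u = p1)
    (hf : IsProjectionElem f) (hp0f : p0 * f = f) (hfp0 : f * p0 = f) :
    IsProjectionElem (u * f * star u) ∧ (f ≠ 0 → u * f * star u ≠ 0) ∧
      MvNEquiv f (u * f * star u) ∧ p1 * (u * f * star u) = u * f * star u ∧
      (u * f * star u) * p1 = u * f * star u := by
  have hfsq : f * p0 * f = f := by rw [hfp0, hf.2]
  have hproj : IsProjectionElem (u * f * star u) := by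
    constructor
    · rw [StarMul.star_mul, StarMul.star_mul, star_star, hf.1, mul_assoc]
    · calc (u * f * star u) * (u * f * star u) = u * (f * (star u * u) * f) * star u := by
            noncomm_ring
        _ = u * (f * p0 * f) * star u := by rw [hu1]
        _ = u * f * star u := by rw [hfsq]
  have hequiv : MvNEquiv f (u * f * star u) := by
    refine ⟨u * f, ?_, ?_⟩
    · calc star (u * f) * (u * f) = f * (star u * u) * f := by
            rw [StarMul.star_mul, hf.1]; noncomm_ring
        _ = f := by rw [hu1, hfsq]
    · calc (u * f) * star (u * f) = u * (f * f) * star u := by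
            rw [StarMul.star_mul, hf.1]; noncomm_ring
        _ = u * f * star u := by rw [hf.2]
  refine ⟨hproj, ?_, hequiv, ?_, ?_⟩
  · intro hf0 h0
    apply hf0
    obtain ⟨w, hw1, hw2⟩ := hequiv
    have hwz : w * star w = 0 := by rw [hw2]; exact h0
    rw [← hw1, zero_of_mul_star w hwz]
    simp
  · calc p1 * (u * f * star u)
        = u * ((star u * u) * f) * star u := by rw [← hu2]; noncomm_ring
      _ = u * f * star u := by rw [hu1, hp0f]
  · calc (u * f * star u) * p1
        = u * (f * (star u * u)) * star u := by rw [← hu2]; noncomm_ring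
      _ = u * f * star u := by rw [hu1, hfp0]

/-- The comparison lemma: any two nonzero projections dominate equivalent
nonzero subprojections. -/
lemma compare (hsimple : IsSimpleCStarAlgebra A) (hSP : PropertySP A) (q r : A)
    (hqproj : IsProjectionElem q) (hrproj : IsProjectionElem r) (hq0 : q ≠ 0) (hr0 : r ≠ 0) :
    ∃ e f v : A, IsProjectionElem e ∧ IsProjectionElem f ∧ e ≠ 0 ∧ f ≠ 0 ∧
      q * e = e ∧ e * q = e ∧ r * f = f ∧ f * r = f ∧ star v * v = f ∧ v * star v = e := by
  obtain ⟨a0, ha0⟩ := hsimple.1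
  haveI : Nontrivial A := ⟨⟨a0, 0, ha0⟩⟩
  have hqsa : IsSelfAdjoint q := hqproj.1
  have hrsa : IsSelfAdjoint r := hrproj.1
  obtain ⟨a, hx0⟩ := corner_nonzero hsimple q r hq0 hr0
  set x := q * a * r with hx
  have hqx : q * x = x := by
    rw [hx]
    calc q * (q * a * r) = (q * q) * a * r := by noncomm_ring
      _ = q * a * r := by rw [hqproj.2]
  have hxr : x * r = x := by
    rw [hx, mul_assoc, hrproj.2]
  set b := star x * x with hb
  have hb0 : 0 ≤ b := star_mul_self_nonneg x
  have hbsa : IsSelfAdjoint b := IsSelfAdjoint.of_nonneg hb0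
  have hbne : b ≠ 0 := fun h => hx0 (zero_of_star_mul x h)
  have hbr : b * r = b := by rw [hb, mul_assoc, hxr]
  have hrb : r * b = b := by
    have h1 : r * b = star (b * r) := by
      rw [StarMul.star_mul, hbsa.star_eq, hrsa.star_eq]
    rw [h1, hbr, hbsa.star_eq]
  set δ := ‖b‖ / 2 with hδ
  have hδ0 : 0 < δ := by
    rw [hδ]
    have : 0 < ‖b‖ := norm_pos_iff.mpr hbne
    linarith
  set g := fun t : ℝ => max (t - δ) 0 with hg
  have hgcont : Continuous g := by rw [hg]; fun_prop
  set p := cfc g b with hp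
  have hp0 : 0 ≤ p := cfc_nonneg (fun t _ => le_max_right _ _)
  have hpsa : IsSelfAdjoint p := IsSelfAdjoint.of_nonneg hp0
  -- p ≠ 0
  have hpne : p ≠ 0 := by
    intro hzero
    have hble : b ≤ p + algebraMap ℝ A δ := by
      have h1 : cfc (fun t : ℝ => g t + δ) b = p + algebraMap ℝ A δ := by
        rw [cfc_add b g (fun _ => δ) hgcont.continuousOn (by fun_prop), cfc_const δ b hbsa, hp]
      rw [← h1]
      calc b = cfc (id : ℝ → ℝ) b := (cfc_id ℝ b hbsa).symm
        _ ≤ cfc (fun t : ℝ => g t + δ) b := by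
            refine cfc_mono fun t _ => ?_
            rw [hg]
            simp only [id_eq]
            rcases le_total t δ with h | h
            · have : max (t - δ) 0 = 0 ∨ True := Or.inr trivial
              nlinarith [le_max_right (t - δ) (0:ℝ), le_max_left (t - δ) (0:ℝ)]
            · nlinarith [le_max_left (t - δ) (0:ℝ)]
    rw [hzero, zero_add] at hble
    have hnb : ‖b‖ ≤ ‖algebraMap ℝ A δ‖ :=
      CStarAlgebra.norm_le_norm_of_nonneg_of_le hb0 hble
    have : ‖algebraMap ℝ A δ‖ = δ := by
      rw [Algebra.algebraMap_eq_smul_one, norm_smul, norm_one, mul_one,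
        Real.norm_eq_abs, abs_of_pos hδ0]
    rw [this, hδ] at hnb
    have : ‖b‖ ≤ 0 := by linarith
    exact hbne (norm_le_zero_iff.mp this)
  -- p ≤ b and absorption by r
  have hpleb : p ≤ b := by
    calc p = cfc g b := hp
      _ ≤ cfc (id : ℝ → ℝ) b := by
          refine cfc_mono fun t ht => ?_
          have ht0 : 0 ≤ t := spectrum_nonneg_of_nonneg hb0 ht
          rw [hg]; simp only [id_eq]
          exact max_le (by linarith) ht0
      _ = b := cfc_id ℝ b hbsa
  have h1rsa : IsSelfAdjoint ((1:A) - r) := (IsSelfAdjoint.one A).sub hrsa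
  have h1rb : (1 - r) * b = 0 := by rw [sub_mul, one_mul, hrb, sub_self]
  have hconj0 : (1 - r) * p * (1 - r) = 0 := by
    refine le_antisymm ?_ ?_
    · calc (1 - r) * p * (1 - r) ≤ (1 - r) * b * (1 - r) := by
            have := star_left_conjugate_le_conjugate hpleb (1 - r)
            rwa [h1rsa.star_eq] at this
        _ = 0 := by rw [h1rb, zero_mul]
    · have := star_left_conjugate_nonneg hp0 (1 - r)
      rwa [h1rsa.star_eq] at this
  set s := cfc (fun t : ℝ => Real.sqrt (g t)) b with hs
  have hssa : IsSelfAdjoint s := cfc_predicate _ b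
  have hss : s * s = p := by
    rw [hs, hp, ← cfc_mul _ _ b (by fun_prop) (by fun_prop)]
    congr 1; funext t
    exact Real.mul_self_sqrt (le_max_right _ _)
  have hpr : p * r = p := by
    have hs1r : s * (1 - r) = 0 := by
      refine zero_of_star_mul _ ?_
      rw [StarMul.star_mul, h1rsa.star_eq, hssa.star_eq]
      calc (1 - r) * s * (s * (1 - r)) = (1 - r) * (s * s) * (1 - r) := by noncomm_ring
        _ = 0 := by rw [hss, hconj0]
    have : p * (1 - r) = 0 := by
      calc p * (1 - r) = s * (s * (1 - r)) := by rw [← mul_assoc, hss]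
        _ = 0 := by rw [hs1r, mul_zero]
    rw [mul_sub, mul_one, sub_eq_zero] at this
    exact this.symm
  have hrp : r * p = p := by
    have h1 : r * p = star (p * r) := by
      rw [StarMul.star_mul, hpsa.star_eq, hrsa.star_eq]
    rw [h1, hpr, hpsa.star_eq]
  -- SP gives a projection f in herSub p
  obtain ⟨f, hfher, hfproj, hf0⟩ :=
    hSP (herSub p) (isHerSub_herSub p hp0) (herSub_nonzero p hp0 hpne)
  have hfr : f * r = f := herSub_absorb_right hpr hfher
  have hrf : r * f = f := herSub_absorb_left hrp hfher
  -- the function h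
  set hfun := fun t : ℝ => (Real.sqrt (max t δ))⁻¹ with hhfun
  have hhcont : Continuous hfun := by
    rw [hhfun]
    refine Continuous.inv₀ (by fun_prop) fun t => ?_
    have : 0 < max t δ := lt_max_of_lt_right hδ0
    exact (Real.sqrt_pos.mpr this).ne'
  set K := cfc hfun b * b * cfc hfun b with hK
  have hKeq : K = cfc (fun t : ℝ => hfun t * t * hfun t) b := by
    rw [hK]
    rw [cfc_mul _ _ b (by exact (hhcont.mul continuous_id).continuousOn) hhcont.continuousOn]
    rw [cfc_mul _ _ b hhcont.continuousOn (by fun_prop)]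
    rw [cfc_id' ℝ b hbsa]
  have hpK : p * K = p := by
    rw [hKeq, hp, ← cfc_mul _ _ b hgcont.continuousOn (by exact ((hhcont.mul continuous_id).mul hhcont).continuousOn)]
    congr 1; funext t
    rcases le_or_gt t δ with h | h
    · rw [hg]
      simp only
      rw [max_eq_right (by linarith : t - δ ≤ 0), zero_mul]
    · have ht0 : 0 < t := lt_trans hδ0 h
      have hmax : max t δ = t := max_eq_left h.le
      rw [hhfun]
      simp only
      rw [hmax]
      have hsq : Real.sqrt t * Real.sqrt t = t := Real.mul_self_sqrt ht0.le
      have : (Real.sqrt t)⁻¹ * t * (Real.sqrt t)⁻¹ = 1 := by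
        rw [← hsq]
        have hsne : Real.sqrt t ≠ 0 := (Real.sqrt_pos.mpr ht0).ne'
        field_simp
        rw [Real.sqrt_sq (Real.sqrt_nonneg t)]
      rw [this, mul_one]
  have hfK : f * K = f := herSub_absorb_right hpK hfher
  -- the partial isometry
  set v := x * cfc hfun b * f with hv
  have hhsa : IsSelfAdjoint (cfc hfun b) := cfc_predicate _ b
  have hvv : star v * v = f := by
    have hstv : star v = f * cfc hfun b * star x := by
      rw [hv, StarMul.star_mul, StarMul.star_mul, hfproj.1, hhsa.star_eq, mul_assoc]
    calc star v * v = f * (cfc hfun b * (star x * x) * cfc hfun b) * f := by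
          rw [hstv, hv]; noncomm_ring
      _ = f * K * f := by rw [← hb, ← hK]
      _ = f := by rw [hfK, hfproj.2]
  set e := v * star v with he
  have hvf : v * f = v := by
    rw [hv, mul_assoc (x * cfc hfun b) f f, hfproj.2]
  have heproj : IsProjectionElem e := by
    constructor
    · rw [he, StarMul.star_mul, star_star]
    · calc e * e = v * (star v * v) * star v := by rw [he]; noncomm_ring
        _ = v * f * star v := by rw [hvv]
        _ = e := by rw [hvf, he]
  have he0 : e ≠ 0 := by
    intro h
    apply hf0
    rw [← hvv, zero_of_mul_star v (he ▸ h)]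
    simp
  have hqv : q * v = v := by
    rw [hv, ← mul_assoc, ← mul_assoc, hqx]
  have hqe : q * e = e := by rw [he, ← mul_assoc, hqv]
  have heq : e * q = e := by
    have h1 : e * q = star (q * e) := by
      rw [StarMul.star_mul, hqsa.star_eq, heproj.1]
    rw [h1, hqe, heproj.1]
  exact ⟨e, f, v, heproj, hfproj, he0, hf0, hqe, heq, hrf, hfr, hvv, rfl⟩

end Aux6

section Aux7
variable {A : Type*} [CStarAlgebra A] [PartialOrder A] [StarOrderedRing A]

lemma herSub_zero_right {x y : A} (h : x * y = 0) {z : A} (hz : z ∈ herSub x) :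
    z * y = 0 := by
  have : herSub x ⊆ {z : A | z * y = 0} := by
    refine closure_minimal ?_ (isClosed_eq (by fun_prop) continuous_const)
    rintro w ⟨t, rfl⟩
    calc (x * t * x) * y = x * t * (x * y) := by noncomm_ring
      _ = 0 := by rw [h, mul_zero]
  exact this hz

lemma herSub_zero_left {x y : A} (h : y * x = 0) {z : A} (hz : z ∈ herSub x) :
    y * z = 0 := by
  have : herSub x ⊆ {z : A | y * z = 0} := by
    refine closure_minimal ?_ (isClosed_eq (by fun_prop) continuous_const)
    rintro w ⟨t, rfl⟩
    calc y * (x * t * x) = (y * x) * (t * x) := by noncomm_ring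
      _ = 0 := by rw [h, zero_mul]
  exact this hz

lemma exists_orth_pos (hinfdim : ¬ FiniteDimensional ℂ A) (hsimple : IsSimpleCStarAlgebra A)
    (hSP : PropertySP A) (B : Set A) (hB : IsHerSub B) (hBne : ∃ b ∈ B, b ≠ 0) :
    ∀ n : ℕ, ∃ a : Fin n → A, (∀ i, a i ∈ B) ∧ (∀ i, 0 ≤ a i) ∧ (∀ i, a i ≠ 0) ∧
      (∀ i j, i ≠ j → a i * a j = 0) := by
  intro n
  induction n with
  | zero => exact ⟨Fin.elim0, fun i => i.elim0, fun i => i.elim0, fun i => i.elim0,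
      fun i => i.elim0⟩
  | succ n IH =>
    obtain ⟨a, haB, ha0, hane, haorth⟩ := IH
    by_cases hn : n = 0
    · subst hn
      obtain ⟨b, hbB, hb0⟩ := hBne
      refine ⟨fun _ => star b * b, fun _ => ?_, fun _ => star_mul_self_nonneg b,
        fun _ => fun h => hb0 (zero_of_star_mul b h), fun i j hij => ?_⟩
      · exact hB.2.2.2.1 _ (hB.2.2.2.2.2.1 b hbB) _ hbB
      · have h1 := i.isLt
        have h2 := j.isLt
        exact absurd (Fin.ext (by omega)) hij
    · have hpos : 0 < n := Nat.pos_of_ne_zero hn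
      set i0 : Fin n := ⟨0, hpos⟩ with hi0
      obtain ⟨c, d, hcher, hdher, hc0, hd0, hcne, hdne, hcd, hdc⟩ :=
        two_orth hinfdim hsimple hSP (herSub (a i0)) (isHerSub_herSub _ (ha0 i0))
          (herSub_nonzero _ (ha0 i0) (hane i0))
      have hcB : c ∈ B := hB.herSub_subset (haB i0) (ha0 i0) hcher
      have hdB : d ∈ B := hB.herSub_subset (haB i0) (ha0 i0) hdher
      set a' : Fin (n+1) → A := Fin.cons c (Function.update a i0 d) with ha'
      have hupd : ∀ i : Fin n, a' i.succ = if i = i0 then d else a i := by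
        intro i
        rw [ha', Fin.cons_succ, Function.update_apply]
      have ha'0 : a' 0 = c := by rw [ha', Fin.cons_zero]
      refine ⟨a', ?_, ?_, ?_, ?_⟩
      · intro i
        refine Fin.cases ?_ (fun i => ?_) i
        · rw [ha'0]; exact hcB
        · rw [hupd]
          split
          · exact hdB
          · exact haB i
      · intro i
        refine Fin.cases ?_ (fun i => ?_) i
        · rw [ha'0]; exact hc0
        · rw [hupd]
          split
          · exact hd0
          · exact ha0 i
      · intro i
        refine Fin.cases ?_ (fun i => ?_) i
        · rw [ha'0]; exact hcne
        · rw [hupd]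
          split
          · exact hdne
          · exact hane i
      · have key1 : ∀ j : Fin n, a' 0 * a' j.succ = 0 := by
          intro j
          rw [ha'0, hupd]
          split
          · exact hcd
          · next hne =>
              exact herSub_zero_right (haorth i0 j (fun h => hne h.symm)) hcher
        have key2 : ∀ i : Fin n, a' i.succ * a' 0 = 0 := by
          intro i
          rw [ha'0, hupd]
          split
          · exact hdc
          · next hne => exact herSub_zero_left (haorth i i0 hne) hcher
        have key3 : ∀ i j : Fin n, i ≠ j → a' i.succ * a' j.succ = 0 := by
          intro i j hij
          rw [hupd, hupd]
          split
          · next hi =>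
              split
              · next hj => exact absurd (hi.trans hj.symm) hij
              · next hj =>
                  subst hi
                  exact herSub_zero_right (haorth i0 j (fun h => hj h.symm)) hdher
          · next hi =>
              split
              · next hj =>
                  subst hj
                  exact herSub_zero_left (haorth i i0 hi) hdher
              · next hj => exact haorth i j hij
        intro i j hij
        rcases Fin.eq_zero_or_eq_succ i with hi | ⟨i', rfl⟩ <;>
          rcases Fin.eq_zero_or_eq_succ j with hj | ⟨j', rfl⟩
        · exact absurd (hi.trans hj.symm) hij
        · subst hi; exact key1 j'
        · subst hj; exact key2 i'
        · exact key3 i' j' (fun h => hij (by rw [h]))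

lemma equalize (hsimple : IsSimpleCStarAlgebra A) (hSP : PropertySP A) :
    ∀ (n : ℕ) (q : Fin n → A), (∀ i, IsProjectionElem (q i)) → (∀ i, q i ≠ 0) →
      (∀ i j, i ≠ j → q i * q j = 0) →
      ∃ p : Fin n → A, (∀ i, IsProjectionElem (p i)) ∧ (∀ i, p i ≠ 0) ∧
        (∀ i, q i * p i = p i ∧ p i * q i = p i) ∧ ∀ i j, MvNEquiv (p i) (p j) := by
  intro n
  induction n with
  | zero => exact fun q _ _ _ => ⟨Fin.elim0, fun i => i.elim0, fun i => i.elim0,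
      fun i => i.elim0, fun i => i.elim0⟩
  | succ n IH =>
    intro q hqproj hqne hqorth
    by_cases hn : n = 0
    · subst hn
      refine ⟨fun _ => q 0, fun _ => hqproj 0, fun _ => hqne 0,
        fun i => ?_, fun i j => mvn_refl (hqproj 0)⟩
      have h1 := i.isLt
      have : i = 0 := Fin.ext (by omega)
      rw [this]
      exact ⟨(hqproj 0).2, (hqproj 0).2⟩
    · have hpos : 0 < n := Nat.pos_of_ne_zero hn
      obtain ⟨p', hp'proj, hp'ne, hp'sub, hp'equiv⟩ :=
        IH (fun i => q i.succ) (fun i => hqproj i.succ) (fun i => hqne i.succ)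
          (fun i j hij => hqorth i.succ j.succ (fun h => hij (Fin.succ_injective n h)))
      set i0 : Fin n := ⟨0, hpos⟩ with hi0
      obtain ⟨e, f, v, heproj, hfproj, he0, hf0, hqe, heq, hp0f, hfp0, hvv, hvv'⟩ :=
        compare hsimple hSP (q 0) (p' i0) (hqproj 0) (hp'proj i0) (hqne 0) (hp'ne i0)
      have hM : ∀ i : Fin n, MvNEquiv (p' i0) (p' i) := fun i => hp'equiv i0 i
      choose u hu1 hu2 using hM
      set p : Fin (n+1) → A := Fin.cons e (fun i => u i * f * star (u i)) with hp
      have hp0 : p 0 = e := by rw [hp, Fin.cons_zero]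
      have hps : ∀ i : Fin n, p i.succ = u i * f * star (u i) := by
        intro i; rw [hp, Fin.cons_succ]
      have htrans : ∀ i : Fin n, IsProjectionElem (u i * f * star (u i)) ∧
          (f ≠ 0 → u i * f * star (u i) ≠ 0) ∧
          MvNEquiv f (u i * f * star (u i)) ∧
          p' i * (u i * f * star (u i)) = u i * f * star (u i) ∧
          (u i * f * star (u i)) * p' i = u i * f * star (u i) :=
        fun i => mvn_transfer (hu1 i) (hu2 i) hfproj hp0f hfp0
      have hprojAll : ∀ k, IsProjectionElem (p k) := by
        intro k
        rcases Fin.eq_zero_or_eq_succ k with hk | ⟨k', rfl⟩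
        · rw [hk, hp0]; exact heproj
        · rw [hps]; exact (htrans k').1
      have hto_f : ∀ k, MvNEquiv f (p k) := by
        intro k
        rcases Fin.eq_zero_or_eq_succ k with hk | ⟨k', rfl⟩
        · rw [hk, hp0]; exact ⟨v, hvv, hvv'⟩
        · rw [hps]; exact (htrans k').2.2.1
      refine ⟨p, hprojAll, ?_, ?_, ?_⟩
      · intro k
        rcases Fin.eq_zero_or_eq_succ k with hk | ⟨k', rfl⟩
        · rw [hk, hp0]; exact he0
        · rw [hps]; exact (htrans k').2.1 hf0
      · intro k
        rcases Fin.eq_zero_or_eq_succ k with hk | ⟨k', rfl⟩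
        · rw [hk, hp0]; exact ⟨hqe, heq⟩
        · rw [hps]
          have h1 := (htrans k').2.2.2.1
          have h2 := (htrans k').2.2.2.2
          have hsub := hp'sub k'
          constructor
          · calc q k'.succ * (u k' * f * star (u k'))
                = q k'.succ * (p' k' * (u k' * f * star (u k'))) := by rw [h1]
              _ = (q k'.succ * p' k') * (u k' * f * star (u k')) := by noncomm_ring
              _ = p' k' * (u k' * f * star (u k')) := by rw [hsub.1]
              _ = u k' * f * star (u k') := h1
          · calc (u k' * f * star (u k')) * q k'.succ
                = ((u k' * f * star (u k')) * p' k') * q k'.succ := by rw [h2]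
              _ = (u k' * f * star (u k')) * (p' k' * q k'.succ) := by noncomm_ring
              _ = (u k' * f * star (u k')) * p' k' := by rw [hsub.2]
              _ = u k' * f * star (u k') := h2
      · intro i j
        exact mvn_trans (hprojAll i) (hprojAll j) (mvn_symm (hto_f i)) (hto_f j)

/-- Subprojections of members of a hereditary set are members. -/
lemma IsHerSub.proj_mem {B : Set A} (hB : IsHerSub B) {p q : A}
    (hp : IsProjectionElem p) (hqproj : IsProjectionElem q) (hq : q ∈ B)
    (h1 : q * p = p) (h2 : p * q = p) : p ∈ B := by
  refine hB.2.2.2.2.2.2 p q ⟨p, by rw [hp.1, hp.2]⟩ ⟨q - p, ?_⟩ hq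
  have hsq : (q - p) * (q - p) = q - p := by
    rw [mul_sub, sub_mul, sub_mul, hp.2, h1, h2, hqproj.2]
    abel
  rw [star_sub, hp.1, hqproj.1, hsq]

end Aux7

theorem exists_orthogonal_equiv_projections (A : Type*) [CStarAlgebra A]
    (hinfdim : ¬ FiniteDimensional ℂ A)
    (hsimple : IsSimpleCStarAlgebra A) (hSP : PropertySP A)
    (B : Set A) (hB : IsHerSub B) (hBne : ∃ b ∈ B, b ≠ 0) (n : ℕ) :
    ∃ p : Fin n → A, (∀ i, p i ∈ B) ∧ (∀ i, IsProjectionElem (p i)) ∧ (∀ i, p i ≠ 0) ∧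
      (∀ i j, i ≠ j → p i * p j = 0) ∧ (∀ i j, MvNEquiv (p i) (p j)) := by
  letI : PartialOrder A := CStarAlgebra.spectralOrder A
  letI : StarOrderedRing A := CStarAlgebra.spectralOrderedRing A
  obtain ⟨a, haB, ha0, hane, haorth⟩ := exists_orth_pos hinfdim hsimple hSP B hB hBne n
  have hq : ∀ i : Fin n, ∃ q : A, q ∈ herSub (a i) ∧ IsProjectionElem q ∧ q ≠ 0 := by
    intro i
    obtain ⟨q, h1, h2, h3⟩ := hSP (herSub (a i)) (isHerSub_herSub _ (ha0 i))
      (herSub_nonzero _ (ha0 i) (hane i))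
    exact ⟨q, h1, h2, h3⟩
  choose qf hqher hqproj hqne using hq
  have hqB : ∀ i, qf i ∈ B := fun i => hB.herSub_subset (haB i) (ha0 i) (hqher i)
  have hqorth : ∀ i j, i ≠ j → qf i * qf j = 0 := fun i j hij =>
    herSub_orth (haorth i j hij) (hqher i) (hqher j)
  obtain ⟨p, hpproj, hpne, hpsub, hpequiv⟩ := equalize hsimple hSP n qf hqproj hqne hqorth
  refine ⟨p, ?_, hpproj, hpne, ?_, hpequiv⟩
  · intro i
    exact hB.proj_mem (hpproj i) (hqproj i) (hqB i) (hpsub i).1 (hpsub i).2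
  · intro i j hij
    calc p i * p j = (p i * qf i) * (qf j * p j) := by rw [(hpsub i).2, (hpsub j).1]
      _ = p i * (qf i * qf j) * p j := by noncomm_ring
      _ = 0 := by rw [hqorth i j hij, mul_zero, zero_mul]
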